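/- (Theorem 3.1; convergence.) Let k₁,…,k_l be positive integers and k_{l+1} ≥ 0 an integer. If k_i ≥ 2 for some i with 1 ≤ i ≤ l, then the family of positive terms 1/((n₁−n_{l+1}) n₁^{k₁} ⋯ n_l^{k_l}) indexed by integers n₁ > n₂ > ⋯ > n_l > n_{l+1} ≥ 0 is summable (T(k₁,…,k_l) is finite). If k_i ≥ 2 for some 1 ≤ i ≤ l or k_{l+1} ≥ 1, then the family 1/((n₁−n_{l+1}) n₁^{k₁} ⋯ n_l^{k_l} n_{l+1}^{k_{l+1}}) indexed by integers n₁ > n₂ > ⋯ > n_l > n_{l+1} > 0 is summable (S(k₁,…,k_l,k_{l+1}) is finite). -/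

import Mathlib

open Finset


private lemma tele_aux (l : ℕ) (f : Fin (l + 1) → ℝ) :
    ∑ j : Fin l, (f j.castSucc - f j.succ) = f 0 - f (Fin.last l) := by
  induction l with
  | zero => simp [Fin.last]
  | succ l ih =>
    rw [Fin.sum_univ_succ]
    have h := ih (fun i => f i.succ)
    simp only [Fin.succ_castSucc] at h
    rw [h]
    simp [Fin.succ_last]

private lemma summable_pi_rpow (q : ℝ) (hq : 1 < q) :
    ∀ l : ℕ, Summable (fun d : Fin l → ℕ => ∏ j, ((d j : ℝ) ^ q)⁻¹)
  | 0 => by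
    simp only [Finset.univ_eq_empty, Finset.prod_empty]
    exact summable_of_finite_support (Set.toFinite _)
  | (l + 1) => by
    have h1 : Summable (fun n : ℕ => ((n : ℝ) ^ q)⁻¹) := Real.summable_nat_rpow_inv.mpr hq
    have h2 := summable_pi_rpow q hq l
    have h3 := h1.mul_of_nonneg h2 (fun n => by positivity) (fun d => by positivity)
    have he : Function.Injective
        (fun d : Fin (l + 1) → ℕ => ((d 0, fun j => d j.succ) : ℕ × (Fin l → ℕ))) := by
      intro a b hab
      funext i
      induction i using Fin.cases with
      | zero => exact congrArg Prod.fst hab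
      | succ j => exact congrFun (congrArg Prod.snd hab) j
    have := h3.comp_injective he
    refine this.congr fun d => ?_
    simp only [Function.comp]
    rw [Fin.prod_univ_succ]

private lemma rpow_interp {x y z a : ℝ} (hx : 0 ≤ x) (hy : 0 ≤ y) (hxz : x ≤ z) (hyz : y ≤ z)
    (ha0 : 0 ≤ a) (ha1 : a ≤ 1) (hz1 : 1 ≤ z) : x ^ a * y ^ (1 - a) ≤ z := by
  have hz : (0:ℝ) < z := lt_of_lt_of_le zero_lt_one hz1
  calc x ^ a * y ^ (1 - a) ≤ z ^ a * z ^ (1 - a) :=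
        mul_le_mul (Real.rpow_le_rpow hx hxz ha0) (Real.rpow_le_rpow hy hyz (by linarith))
          (Real.rpow_nonneg hy _) (Real.rpow_nonneg hz.le _)
    _ = z := by rw [← Real.rpow_add hz, add_sub_cancel, Real.rpow_one]

private lemma inv_le_aux {x y C : ℝ} (hx : 0 < x) (hy : 0 < y) (h : x ≤ C * y) :
    y⁻¹ ≤ C * x⁻¹ := by
  rw [← one_div, show C * x⁻¹ = C / x from (div_eq_mul_inv C x).symm,
    div_le_div_iff₀ hy hx]
  linarith


private lemma core_ineq (l : ℕ) (hl : 1 ≤ l) (d N : Fin l → ℝ) (hd : ∀ j, 1 ≤ d j)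
    (hdN : ∀ j, d j ≤ N j) (K : Fin l → ℕ) (hK : ∀ j, 1 ≤ K j) (B E : ℝ) (hB : 1 ≤ B)
    (p : Fin l)
    (hp : B ^ (1 + 1 / (2 * (l : ℝ))) * d p ^ (1 - 1 / (2 * (l : ℝ))) ≤ N p ^ K p * E) :
    B ^ (1 + 1 / (2 * (l : ℝ))) * ∏ j, d j ^ (1 + 1 / (2 * (l : ℝ))) ≤
      (∑ j, d j) * (∏ j, N j ^ K j) * E := by
  set ε : ℝ := 1 / (2 * (l : ℝ)) with hεdef
  have hl0 : (0 : ℝ) < l := by exact_mod_cast hl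
  have hε0 : 0 < ε := by rw [hεdef]; positivity
  have hεl : ε = ((2:ℝ) * l)⁻¹ := by rw [hεdef, one_div]
  have h2ε : ε + ε ≤ (l : ℝ)⁻¹ := by
    refine le_of_eq ?_
    rw [hεl, ← two_mul, mul_inv, ← mul_assoc, mul_inv_cancel₀ two_ne_zero, one_mul]
  have hd0 : ∀ j, (0 : ℝ) < d j := fun j => lt_of_lt_of_le zero_lt_one (hd j)
  have hN1 : ∀ j, (1 : ℝ) ≤ N j := fun j => (hd j).trans (hdN j)
  have hprodd : (0 : ℝ) ≤ ∏ j, d j := Finset.prod_nonneg fun j _ => (hd0 j).le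
  have hsum0 : (0 : ℝ) ≤ ∑ j, d j := Finset.sum_nonneg fun j _ => (hd0 j).le
  -- Step A : (∏ d)^(1/l) ≤ ∑ d
  have hA : ∏ j, d j ^ ((l : ℝ)⁻¹) ≤ ∑ j, d j := by
    have h1 : ∏ j, d j ≤ (∑ j, d j) ^ l := by
      calc ∏ j, d j ≤ ∏ _j : Fin l, (∑ i, d i) :=
            Finset.prod_le_prod (fun j _ => (hd0 j).le)
              (fun j _ => Finset.single_le_sum (fun i _ => (hd0 i).le) (Finset.mem_univ j))
        _ = (∑ i, d i) ^ l := by rw [Finset.prod_const, Finset.card_univ, Fintype.card_fin]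
    have h2 := Real.rpow_le_rpow hprodd h1 (by positivity : (0:ℝ) ≤ (l : ℝ)⁻¹)
    rw [← Real.rpow_natCast (∑ j, d j) l, ← Real.rpow_mul hsum0,
      mul_inv_cancel₀ (ne_of_gt hl0), Real.rpow_one] at h2
    rw [Real.finset_prod_rpow _ _ (fun j _ => (hd0 j).le)]
    exact h2
  -- pointwise d_j ≤ N_j ^ K_j
  have hBj : ∀ j, d j ≤ N j ^ K j := fun j => (hdN j).trans
    (by calc N j = N j ^ 1 := (pow_one _).symm
      _ ≤ N j ^ K j := pow_le_pow_right₀ (hN1 j) (hK j))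
  -- exponent comparison
  set c : Fin l → ℝ := fun j => if j = p then 1 - ε else 1 with hcdef
  have e1 : d p ^ ((1 : ℝ) - ε) * ∏ j ∈ univ.erase p, d j = ∏ j, d j ^ c j := by
    rw [← Finset.mul_prod_erase Finset.univ (fun j => d j ^ c j) (Finset.mem_univ p)]
    congr 1
    · simp [hcdef]
    · exact Finset.prod_congr rfl fun j hj => by
        have hjp : j ≠ p := Finset.ne_of_mem_erase hj
        simp [hcdef, hjp, Real.rpow_one]
  have key : ∏ j, d j ^ (1 + ε) ≤
      (∏ j, d j ^ ((l : ℝ)⁻¹)) * (d p ^ ((1 : ℝ) - ε) * ∏ j ∈ univ.erase p, d j) := by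
    rw [e1, ← Finset.prod_mul_distrib]
    refine Finset.prod_le_prod (fun j _ => Real.rpow_nonneg (hd0 j).le _) (fun j _ => ?_)
    rw [← Real.rpow_add (hd0 j)]
    refine Real.rpow_le_rpow_of_exponent_le (hd j) ?_
    by_cases hjp : j = p <;> simp [hcdef, hjp] <;> linarith
  -- assembly
  have hB0 : (0:ℝ) < B := lt_of_lt_of_le zero_lt_one hB
  have hNpE : (0 : ℝ) < N p ^ K p * E :=
    lt_of_lt_of_le (mul_pos (Real.rpow_pos_of_pos hB0 _) (Real.rpow_pos_of_pos (hd0 p) _)) hp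
  have hRHS : (∑ j, d j) * (∏ j, N j ^ K j) * E
      = (∑ j, d j) * ((N p ^ K p * E) * ∏ j ∈ univ.erase p, N j ^ K j) := by
    rw [← Finset.mul_prod_erase Finset.univ (fun j => N j ^ K j) (Finset.mem_univ p)]
    ring
  rw [hRHS]
  calc B ^ (1 + ε) * ∏ j, d j ^ (1 + ε)
      ≤ B ^ (1 + ε) *
        ((∏ j, d j ^ ((l : ℝ)⁻¹)) * (d p ^ ((1:ℝ) - ε) * ∏ j ∈ univ.erase p, d j)) :=
        mul_le_mul_of_nonneg_left key (Real.rpow_nonneg (by linarith) _)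
    _ = (∏ j, d j ^ ((l : ℝ)⁻¹)) *
        ((B ^ (1 + ε) * d p ^ ((1:ℝ) - ε)) * ∏ j ∈ univ.erase p, d j) := by ring
    _ ≤ (∑ j, d j) * ((N p ^ K p * E) * ∏ j ∈ univ.erase p, N j ^ K j) := by
        refine mul_le_mul hA ?_ ?_ hsum0
        · refine mul_le_mul hp (Finset.prod_le_prod (fun j _ => (hd0 j).le)
            (fun j _ => hBj j)) (Finset.prod_nonneg fun j _ => (hd0 j).le) hNpE.le
        · have : (0:ℝ) ≤ B ^ (1 + ε) * d p ^ ((1:ℝ) - ε) :=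
            (mul_pos (Real.rpow_pos_of_pos hB0 _) (Real.rpow_pos_of_pos (hd0 p) _)).le
          exact mul_nonneg this (Finset.prod_nonneg fun j _ => (hd0 j).le)


section helpers
variable (l : ℕ)

private lemma psi_inj (a b : Fin (l + 1) → ℕ)
    (ha : ∀ i j : Fin (l + 1), i < j → a j < a i)
    (hb : ∀ i j : Fin (l + 1), i < j → b j < b i)
    (h1 : (fun j : Fin l => a j.castSucc - a j.succ) = (fun j => b j.castSucc - b j.succ))
    (h2 : a (Fin.last l) = b (Fin.last l)) : a = b := by
  funext i
  induction i using Fin.reverseInduction with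
  | last => exact h2
  | cast i ih =>
    have hA := ha _ _ (Fin.castSucc_lt_succ (i := i))
    have hB := hb _ _ (Fin.castSucc_lt_succ (i := i))
    have h := congrFun h1 i
    omega

private lemma hpA (hl : 1 ≤ l) (n : Fin (l + 1) → ℕ)
    (hmono : ∀ i j : Fin (l + 1), i < j → n j < n i) (K : Fin l → ℕ) (p : Fin l)
    (h2 : 2 ≤ K p) :
    ((n (Fin.last l) : ℝ) + 1) ^ (1 + 1 / (2 * (l : ℝ))) *
      ((n p.castSucc - n p.succ : ℕ) : ℝ) ^ (1 - 1 / (2 * (l : ℝ))) ≤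
      (n p.castSucc : ℝ) ^ K p := by
  have hl0 : (0 : ℝ) < l := by exact_mod_cast hl
  have hε0 : (0 : ℝ) < 1 / (2 * (l : ℝ)) := by positivity
  have hε1 : 1 / (2 * (l : ℝ)) ≤ 1 := by
    rw [div_le_one (by positivity)]
    have : (1 : ℝ) ≤ l := by exact_mod_cast hl
    linarith
  have hlast := hmono p.castSucc (Fin.last l) (Fin.castSucc_lt_last p)
  have hBN : ((n (Fin.last l) : ℝ) + 1) ≤ (n p.castSucc : ℝ) := by
    have : n (Fin.last l) + 1 ≤ n p.castSucc := hlast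
    exact_mod_cast this
  have hB0 : (0 : ℝ) < (n (Fin.last l) : ℝ) + 1 := by positivity
  have hN1 : (1 : ℝ) ≤ (n p.castSucc : ℝ) := by
    have : 1 ≤ n p.castSucc := by omega
    exact_mod_cast this
  have hdN : ((n p.castSucc - n p.succ : ℕ) : ℝ) ≤ (n p.castSucc : ℝ) := by
    exact_mod_cast Nat.sub_le _ _
  calc ((n (Fin.last l) : ℝ) + 1) ^ (1 + 1 / (2 * (l : ℝ))) *
        ((n p.castSucc - n p.succ : ℕ) : ℝ) ^ (1 - 1 / (2 * (l : ℝ)))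
      = ((n (Fin.last l) : ℝ) + 1) *
        (((n (Fin.last l) : ℝ) + 1) ^ (1 / (2 * (l : ℝ))) *
          ((n p.castSucc - n p.succ : ℕ) : ℝ) ^ (1 - 1 / (2 * (l : ℝ)))) := by
        rw [Real.rpow_add hB0, Real.rpow_one]; ring
    _ ≤ (n p.castSucc : ℝ) * (n p.castSucc : ℝ) := by
        refine mul_le_mul hBN ?_ ?_ (by linarith)
        · exact rpow_interp hB0.le (Nat.cast_nonneg _) hBN hdN hε0.le hε1 hN1
        · exact mul_nonneg (Real.rpow_nonneg hB0.le _) (Real.rpow_nonneg (Nat.cast_nonneg _) _)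
    _ = (n p.castSucc : ℝ) ^ 2 := (sq _).symm
    _ ≤ (n p.castSucc : ℝ) ^ K p := pow_le_pow_right₀ hN1 h2

private lemma hpB (hl : 1 ≤ l) (n : Fin (l + 1) → ℕ)
    (hmono : ∀ i j : Fin (l + 1), i < j → n j < n i) (K : Fin l → ℕ)
    (hK0 : 1 ≤ K ⟨0, hl⟩) (m : ℕ) (hm : 1 ≤ m)
    (hb1 : 1 ≤ n (Fin.last l)) :
    ((n (Fin.last l) : ℝ) + 1) ^ (1 + 1 / (2 * (l : ℝ))) *
      ((n (⟨0, hl⟩ : Fin l).castSucc - n (⟨0, hl⟩ : Fin l).succ : ℕ) : ℝ) ^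
        (1 - 1 / (2 * (l : ℝ))) ≤
      (n (⟨0, hl⟩ : Fin l).castSucc : ℝ) ^ K ⟨0, hl⟩ *
        (2 * (n (Fin.last l) : ℝ) ^ m) := by
  set p : Fin l := ⟨0, hl⟩
  have hl0 : (0 : ℝ) < l := by exact_mod_cast hl
  have hε0 : (0 : ℝ) < 1 / (2 * (l : ℝ)) := by positivity
  have hε1 : 1 / (2 * (l : ℝ)) ≤ 1 := by
    rw [div_le_one (by positivity)]
    have : (1 : ℝ) ≤ l := by exact_mod_cast hl
    linarith
  have hlast := hmono p.castSucc (Fin.last l) (Fin.castSucc_lt_last p)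
  have hBN : ((n (Fin.last l) : ℝ) + 1) ≤ (n p.castSucc : ℝ) := by
    have : n (Fin.last l) + 1 ≤ n p.castSucc := hlast
    exact_mod_cast this
  have hB0 : (0 : ℝ) < (n (Fin.last l) : ℝ) + 1 := by positivity
  have hN1 : (1 : ℝ) ≤ (n p.castSucc : ℝ) := by
    have : 1 ≤ n p.castSucc := by omega
    exact_mod_cast this
  have hdN : ((n p.castSucc - n p.succ : ℕ) : ℝ) ≤ (n p.castSucc : ℝ) := by
    exact_mod_cast Nat.sub_le _ _
  have hbR : (1 : ℝ) ≤ (n (Fin.last l) : ℝ) := by exact_mod_cast hb1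
  have hb2 : ((n (Fin.last l) : ℝ) + 1) ≤ 2 * (n (Fin.last l) : ℝ) ^ m := by
    have h1 : (n (Fin.last l) : ℝ) ≤ (n (Fin.last l) : ℝ) ^ m :=
      le_self_pow₀ hbR (by omega)
    linarith
  have hKp : (n p.castSucc : ℝ) ≤ (n p.castSucc : ℝ) ^ K p := by
    calc (n p.castSucc : ℝ) = (n p.castSucc : ℝ) ^ 1 := (pow_one _).symm
      _ ≤ (n p.castSucc : ℝ) ^ K p := pow_le_pow_right₀ hN1 hK0
  calc ((n (Fin.last l) : ℝ) + 1) ^ (1 + 1 / (2 * (l : ℝ))) *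
        ((n p.castSucc - n p.succ : ℕ) : ℝ) ^ (1 - 1 / (2 * (l : ℝ)))
      = (((n (Fin.last l) : ℝ) + 1) ^ (1 / (2 * (l : ℝ))) *
          ((n p.castSucc - n p.succ : ℕ) : ℝ) ^ (1 - 1 / (2 * (l : ℝ)))) *
        ((n (Fin.last l) : ℝ) + 1) := by
        rw [Real.rpow_add hB0, Real.rpow_one]; ring
    _ ≤ (n p.castSucc : ℝ) * (2 * (n (Fin.last l) : ℝ) ^ m) := by
        refine mul_le_mul ?_ hb2 hB0.le (by linarith)
        exact rpow_interp hB0.le (Nat.cast_nonneg _) hBN hdN hε0.le hε1 hN1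
    _ ≤ (n p.castSucc : ℝ) ^ K p * (2 * (n (Fin.last l) : ℝ) ^ m) := by
        refine mul_le_mul_of_nonneg_right hKp ?_
        positivity

end helpers

private lemma main_helper (l : ℕ) (hl : 1 ≤ l) (K : Fin l → ℕ) (hK : ∀ j, 1 ≤ K j)
    (n : Fin (l + 1) → ℕ) (hmono : ∀ i j : Fin (l + 1), i < j → n j < n i)
    (E : ℝ) (p : Fin l)
    (hp : ((n (Fin.last l) : ℝ) + 1) ^ (1 + 1 / (2 * (l : ℝ))) *
        ((n p.castSucc - n p.succ : ℕ) : ℝ) ^ (1 - 1 / (2 * (l : ℝ))) ≤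
        (n p.castSucc : ℝ) ^ K p * E) :
    ((n (Fin.last l) : ℝ) + 1) ^ (1 + 1 / (2 * (l : ℝ))) *
      ∏ j : Fin l, ((n j.castSucc - n j.succ : ℕ) : ℝ) ^ (1 + 1 / (2 * (l : ℝ))) ≤
      ((n 0 : ℝ) - (n (Fin.last l) : ℝ)) * (∏ i : Fin l, (n i.castSucc : ℝ) ^ K i) * E := by
  have hlt : ∀ j : Fin l, n j.succ < n j.castSucc := fun j => hmono _ _ (Fin.castSucc_lt_succ (i := j))
  have hd : ∀ j : Fin l, (1 : ℝ) ≤ ((n j.castSucc - n j.succ : ℕ) : ℝ) := fun j => by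
    have h := hlt j
    have : 1 ≤ n j.castSucc - n j.succ := by omega
    exact_mod_cast this
  have hdN : ∀ j : Fin l, ((n j.castSucc - n j.succ : ℕ) : ℝ) ≤ (n j.castSucc : ℝ) := fun j => by
    exact_mod_cast Nat.sub_le _ _
  have hB1 : (1 : ℝ) ≤ (n (Fin.last l) : ℝ) + 1 := by
    have : (0 : ℝ) ≤ (n (Fin.last l) : ℝ) := Nat.cast_nonneg _
    linarith
  have hcore := core_ineq l hl _ _ hd hdN K hK _ E hB1 p hp
  have hsum : ∑ j : Fin l, ((n j.castSucc - n j.succ : ℕ) : ℝ)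
      = (n 0 : ℝ) - (n (Fin.last l) : ℝ) := by
    calc ∑ j : Fin l, ((n j.castSucc - n j.succ : ℕ) : ℝ)
        = ∑ j : Fin l, ((n j.castSucc : ℝ) - (n j.succ : ℝ)) :=
          Finset.sum_congr rfl fun j _ => by rw [Nat.cast_sub (hlt j).le]
      _ = _ := tele_aux l (fun i => (n i : ℝ))
  rwa [hsum] at hcore

private lemma summable_general (l : ℕ) (hl : 1 ≤ l) (K : Fin l → ℕ) (hK : ∀ j, 1 ≤ K j)
    (P : (Fin (l + 1) → ℕ) → Prop)
    (hP : ∀ n, P n → ∀ i j : Fin (l + 1), i < j → n j < n i)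
    (E : (Fin (l + 1) → ℕ) → ℝ) (hE : ∀ n, P n → 0 < E n)
    (hp : ∀ n, P n → ∃ p : Fin l,
      ((n (Fin.last l) : ℝ) + 1) ^ (1 + 1 / (2 * (l : ℝ))) *
        ((n p.castSucc - n p.succ : ℕ) : ℝ) ^ (1 - 1 / (2 * (l : ℝ))) ≤
        (n p.castSucc : ℝ) ^ K p * (2 * E n)) :
    Summable (fun s : {n : Fin (l + 1) → ℕ // P n} =>
      (((s.1 0 : ℝ) - (s.1 (Fin.last l) : ℝ)) *
        (∏ i : Fin l, (s.1 i.castSucc : ℝ) ^ K i) * E s.1)⁻¹) := by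
  set q : ℝ := 1 + 1 / (2 * (l : ℝ)) with hqdef
  have hl0 : (0 : ℝ) < l := by exact_mod_cast hl
  have hq : 1 < q := by
    have : (0 : ℝ) < 1 / (2 * (l : ℝ)) := by positivity
    rw [hqdef]; linarith
  have hM : Summable (fun x : (Fin l → ℕ) × ℕ =>
      (∏ j, ((x.1 j : ℝ) ^ q)⁻¹) * (((x.2 : ℝ) + 1) ^ q)⁻¹) := by
    have h0 : Summable (fun b : ℕ => ((b : ℝ) ^ q)⁻¹) := Real.summable_nat_rpow_inv.mpr hq
    have h1 : Summable (fun b : ℕ => (((b : ℝ) + 1) ^ q)⁻¹) := by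
      have h2 := h0.comp_injective (add_left_injective 1)
      exact h2.congr fun b => by
        simp only [Function.comp]
        push_cast
        ring_nf
    exact (summable_pi_rpow q hq l).mul_of_nonneg h1 (fun d => by positivity)
      (fun b => by positivity)
  set ψ : {n : Fin (l + 1) → ℕ // P n} → (Fin l → ℕ) × ℕ := fun s =>
    (fun j => s.1 j.castSucc - s.1 j.succ, s.1 (Fin.last l)) with hψdef
  have hψ : Function.Injective ψ := by
    rintro ⟨a, ha⟩ ⟨b, hb⟩ hab
    simp only [hψdef, Prod.mk.injEq] at hab
    exact Subtype.ext (psi_inj l a b (hP a ha) (hP b hb) hab.1 hab.2)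
  have hMψ := (hM.mul_left 2).comp_injective hψ
  have h0l : (0 : Fin (l + 1)) < Fin.last l := by
    rw [Fin.lt_def]
    simp; omega
  refine Summable.of_nonneg_of_le (fun s => ?_) (fun s => ?_) hMψ
  · obtain ⟨n, hn⟩ := s
    have hlt := hP n hn 0 (Fin.last l) h0l
    have hsub : (0 : ℝ) ≤ (n 0 : ℝ) - (n (Fin.last l) : ℝ) := by
      have : (n (Fin.last l) : ℝ) ≤ (n 0 : ℝ) := by exact_mod_cast hlt.le
      linarith
    refine inv_nonneg.mpr (mul_nonneg (mul_nonneg hsub ?_) (hE n hn).le)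
    exact Finset.prod_nonneg fun i _ => pow_nonneg (Nat.cast_nonneg _) _
  · obtain ⟨n, hn⟩ := s
    obtain ⟨p, hpp⟩ := hp n hn
    have hmono := hP n hn
    have hcore := main_helper l hl K hK n hmono (2 * E n) p hpp
    have hd0 : ∀ j : Fin l, (0 : ℝ) < ((n j.castSucc - n j.succ : ℕ) : ℝ) := fun j => by
      have h := hmono _ _ (Fin.castSucc_lt_succ (i := j))
      have : 1 ≤ n j.castSucc - n j.succ := by omega
      exact_mod_cast Nat.lt_of_lt_of_le Nat.zero_lt_one this
    have hB0 : (0 : ℝ) < (n (Fin.last l) : ℝ) + 1 := by positivity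
    have hlhs : (0 : ℝ) < ((n (Fin.last l) : ℝ) + 1) ^ q *
        ∏ j : Fin l, ((n j.castSucc - n j.succ : ℕ) : ℝ) ^ q :=
      mul_pos (Real.rpow_pos_of_pos hB0 _)
        (Finset.prod_pos fun j _ => Real.rpow_pos_of_pos (hd0 j) _)
    have hdenom : (0 : ℝ) < ((n 0 : ℝ) - (n (Fin.last l) : ℝ)) *
        (∏ i : Fin l, (n i.castSucc : ℝ) ^ K i) * E n := by
      refine mul_pos (mul_pos ?_ ?_) (hE n hn)
      · have hlt := hmono 0 (Fin.last l) h0l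
        have : (n (Fin.last l) : ℝ) < (n 0 : ℝ) := by exact_mod_cast hlt
        linarith
      · refine Finset.prod_pos fun i _ => pow_pos ?_ _
        have h := hmono i.castSucc (Fin.last l) (Fin.castSucc_lt_last i)
        have : 0 < n i.castSucc := by omega
        exact_mod_cast this
    have hle := inv_le_aux hlhs hdenom (by
      calc ((n (Fin.last l) : ℝ) + 1) ^ q *
            ∏ j : Fin l, ((n j.castSucc - n j.succ : ℕ) : ℝ) ^ q ≤ _ := hcore
        _ = 2 * (((n 0 : ℝ) - (n (Fin.last l) : ℝ)) *
            (∏ i : Fin l, (n i.castSucc : ℝ) ^ K i) * E n) := by ring)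
    have hMval : ((fun x : (Fin l → ℕ) × ℕ =>
        2 * ((∏ j, ((x.1 j : ℝ) ^ q)⁻¹) * (((x.2 : ℝ) + 1) ^ q)⁻¹)) ∘ ψ) ⟨n, hn⟩
        = 2 * (((n (Fin.last l) : ℝ) + 1) ^ q *
            ∏ j : Fin l, ((n j.castSucc - n j.succ : ℕ) : ℝ) ^ q)⁻¹ := by
      simp only [Function.comp, hψdef]
      rw [Finset.prod_inv_distrib, ← mul_inv]
      congr 1
      rw [mul_comm]
    calc (((n 0 : ℝ) - (n (Fin.last l) : ℝ)) *
          (∏ i : Fin l, (n i.castSucc : ℝ) ^ K i) * E n)⁻¹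
        ≤ 2 * (((n (Fin.last l) : ℝ) + 1) ^ q *
            ∏ j : Fin l, ((n j.castSucc - n j.succ : ℕ) : ℝ) ^ q)⁻¹ := hle
      _ = _ := hMval.symm



/-- **Theorem 3.1 (convergence).**  Let `k₁,…,k_l` be positive integers and `m = k_{l+1} ≥ 0`.
If some `k_i ≥ 2` then the positive family
`1/((n₁-n_{l+1}) n₁^{k₁} ⋯ n_l^{k_l})`, indexed by the strictly decreasing tuples
`n₁ > ⋯ > n_l > n_{l+1} ≥ 0`, is summable (so `T(k₁,…,k_l)` is finite).
If some `k_i ≥ 2` or `m ≥ 1`, then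
`1/((n₁-n_{l+1}) n₁^{k₁} ⋯ n_l^{k_l} n_{l+1}^m)`, indexed by the strictly decreasing tuples
`n₁ > ⋯ > n_l > n_{l+1} > 0`, is summable (so `S(k₁,…,k_l,m)` is finite). -/
theorem T_and_S_summable (k : List ℕ) (hne : k ≠ []) (hpos : ∀ a ∈ k, 1 ≤ a) (m : ℕ) :
    ((∃ a ∈ k, 2 ≤ a) →
      Summable (fun n : {n : Fin (k.length + 1) → ℕ //
          ∀ i j : Fin (k.length + 1), i < j → n j < n i} =>
        (((n.1 0 : ℝ) - (n.1 (Fin.last k.length) : ℝ)) *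
          ∏ i : Fin k.length, (n.1 i.castSucc : ℝ) ^ k.get i)⁻¹)) ∧
    (((∃ a ∈ k, 2 ≤ a) ∨ 1 ≤ m) →
      Summable (fun n : {n : Fin (k.length + 1) → ℕ //
          (∀ i j : Fin (k.length + 1), i < j → n j < n i) ∧ ∀ i, 1 ≤ n i} =>
        (((n.1 0 : ℝ) - (n.1 (Fin.last k.length) : ℝ)) *
          (∏ i : Fin k.length, (n.1 i.castSucc : ℝ) ^ k.get i) *
          (n.1 (Fin.last k.length) : ℝ) ^ m)⁻¹)) := by
  classical
  have hl : 1 ≤ k.length := List.length_pos_iff.mpr hne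
  set l := k.length with hldef
  have hK : ∀ j : Fin l, 1 ≤ k.get j := fun j => hpos _ (k.get_mem j)
  constructor
  · rintro ⟨a, ha, ha2⟩
    obtain ⟨p, hpa⟩ := List.mem_iff_get.mp ha
    have h2 : 2 ≤ k.get p := by rw [hpa]; exact ha2
    have := summable_general l hl (fun j => k.get j) hK
      (fun n => ∀ i j : Fin (l + 1), i < j → n j < n i) (fun n hn => hn)
      (fun _ => (1 : ℝ)) (fun n _ => one_pos)
      (fun n hn => ⟨p, by
        refine (hpA l hl n hn (fun j => k.get j) p h2).trans ?_
        have hpow : (0 : ℝ) ≤ (n p.castSucc : ℝ) ^ k.get p :=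
          pow_nonneg (Nat.cast_nonneg _) _
        show (n p.castSucc : ℝ) ^ k.get p ≤ (n p.castSucc : ℝ) ^ k.get p * (2 * 1)
        nlinarith⟩)
    exact this.congr fun s => by rw [mul_one]
  · intro h
    have hEpos : ∀ n : Fin (l + 1) → ℕ,
        ((∀ i j : Fin (l + 1), i < j → n j < n i) ∧ ∀ i, 1 ≤ n i) →
        (0 : ℝ) < (n (Fin.last l) : ℝ) ^ m := fun n hn => by
      have : (0 : ℕ) < n (Fin.last l) := hn.2 _
      positivity
    refine summable_general l hl (fun j => k.get j) hK
      (fun n => (∀ i j : Fin (l + 1), i < j → n j < n i) ∧ ∀ i, 1 ≤ n i)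
      (fun n hn => hn.1) (fun n => (n (Fin.last l) : ℝ) ^ m) hEpos
      (fun n hn => ?_)
    have hb1 : (1 : ℝ) ≤ (n (Fin.last l) : ℝ) ^ m := by
      have : 1 ≤ n (Fin.last l) := hn.2 _
      have h1 : (1 : ℝ) ≤ (n (Fin.last l) : ℝ) := by exact_mod_cast this
      exact one_le_pow₀ h1
    rcases h with ⟨a, ha, ha2⟩ | hm
    · obtain ⟨p, hpa⟩ := List.mem_iff_get.mp ha
      have h2 : 2 ≤ k.get p := by rw [hpa]; exact ha2
      refine ⟨p, (hpA l hl n hn.1 (fun j => k.get j) p h2).trans ?_⟩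
      have hpow : (0 : ℝ) ≤ (n p.castSucc : ℝ) ^ k.get p :=
        pow_nonneg (Nat.cast_nonneg _) _
      show (n p.castSucc : ℝ) ^ k.get p ≤
        (n p.castSucc : ℝ) ^ k.get p * (2 * (n (Fin.last l) : ℝ) ^ m)
      nlinarith
    · exact ⟨⟨0, hl⟩, hpB l hl n hn.1 (fun j => k.get j) (hK _) m hm (hn.2 _)⟩
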